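/- Let M be a matroid on a finite ground set E, let μ : E → ℕ with A := supp(μ) such that x^μ ∉ J(M), and let ℓ ≥ 1. Then SF_ℓ(J(M) : x^μ) = SF_ℓ(J(M)) : x^μ; equivalently, since J(M) : x^μ = J(M ⧹ A), one has SF_ℓ(J(M ⧹ A)) = SF_ℓ(J(M)) : x^μ. -/

import Mathlib

open Matroid MvPolynomial

/-- The squarefree monomial `x_S = ∏_{i ∈ S} x_i`. -/
noncomputable def xS {α : Type*} [Fintype α] (K : Type*) [Field K] (S : Set α) :
    MvPolynomial α K :=
  ∏ i ∈ S.toFinite.toFinset, MvPolynomial.X i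

/-- The monomial `x^γ = ∏ i, x_i ^ γ(i)`. -/
noncomputable def xPow {α : Type*} [Fintype α] (K : Type*) [Field K] (γ : α → ℕ) :
    MvPolynomial α K :=
  ∏ i : α, (MvPolynomial.X i : MvPolynomial α K) ^ γ i

/-- `p_S`: the ideal of `K[x_i : i ∈ α]` generated by the variables `x_i`, `i ∈ S`. -/
noncomputable def pS {α : Type*} (K : Type*) [Field K] (S : Set α) :
    Ideal (MvPolynomial α K) :=
  Ideal.span (MvPolynomial.X '' S)

/-- The cover ideal `J(M) = ⋂_{F basis of M} p_F` of a matroid `M`. -/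
noncomputable def coverIdeal {α : Type*} [Fintype α] (K : Type*) [Field K] (M : Matroid α) :
    Ideal (MvPolynomial α K) :=
  ⨅ F ∈ {F : Set α | M.IsBase F}, pS K F

/-- The `ℓ`-th symbolic power `J(M)^{(ℓ)} = ⋂_{F basis of M} p_F^ℓ` of the cover ideal. -/
noncomputable def symbPow {α : Type*} [Fintype α] (K : Type*) [Field K] (M : Matroid α)
    (ℓ : ℕ) : Ideal (MvPolynomial α K) :=
  ⨅ F ∈ {F : Set α | M.IsBase F}, (pS K F) ^ ℓ

/-- `SF_ℓ(J(M))`: the ideal generated by the squarefree monomials of `J(M)^{(ℓ)}`, i.e. by the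
monomials `x_S` with `|S ∩ F| ≥ ℓ` for every basis `F` of `M`. -/
noncomputable def SF {α : Type*} [Fintype α] (K : Type*) [Field K] (M : Matroid α)
    (ℓ : ℕ) : Ideal (MvPolynomial α K) :=
  Ideal.span {m : MvPolynomial α K |
    ∃ S : Set α, m = xS K S ∧ ∀ F : Set α, M.IsBase F → ℓ ≤ (S ∩ F).ncard}

/-- Matroid deletion: `M ⧹ D` is the restriction of `M` to `M.E \ D`. -/
def mdel {α : Type*} (M : Matroid α) (D : Set α) : Matroid α := M ↾ (M.E \ D)

/-- Matroid contraction: `M ⧸ C = (M✶ ⧹ C)✶`. -/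
def mcon {α : Type*} (M : Matroid α) (C : Set α) : Matroid α := (mdel M✶ C)✶

/-- A cocircuit of `M`: a minimal subset of the ground set meeting every basis of `M`. -/
def IsCocircuit {α : Type*} (M : Matroid α) (C : Set α) : Prop :=
  C ⊆ M.E ∧ (∀ F, M.IsBase F → (C ∩ F).Nonempty) ∧
    ∀ C' : Set α, C' ⊂ C → ∃ F, M.IsBase F ∧ C' ∩ F = ∅


section Aux

variable {α : Type*} [Fintype α] (K : Type*) [Field K]

/-- indicator finsupp of a set -/
noncomputable def indF (S : Set α) : α →₀ ℕ :=
  Finsupp.equivFunOnFinite.symm (S.indicator 1)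

@[simp] lemma indF_apply (S : Set α) (j : α) : indF S j = S.indicator 1 j := rfl

lemma indF_apply_mem {S : Set α} {j : α} (h : j ∈ S) : indF S j = 1 := by
  simp [Set.indicator_of_mem h]

lemma indF_apply_not_mem {S : Set α} {j : α} (h : j ∉ S) : indF S j = 0 := by
  simp [Set.indicator_of_notMem h]

noncomputable def toF (μ : α → ℕ) : α →₀ ℕ := Finsupp.equivFunOnFinite.symm μ

@[simp] lemma toF_apply (μ : α → ℕ) (j : α) : toF μ j = μ j := rfl

omit [Fintype α] in
lemma prod_X_finset (t : Finset α) :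
    ∏ i ∈ t, (X i : MvPolynomial α K) = monomial (∑ i ∈ t, Finsupp.single i 1) 1 := by
  classical
  induction t using Finset.induction with
  | empty => simp
  | insert _ _ h ih =>
    rw [Finset.prod_insert h, Finset.sum_insert h, ih, X, monomial_mul, one_mul]

lemma xS_eq (S : Set α) : xS K S = monomial (indF S) 1 := by
  classical
  have hsum : (∑ i ∈ S.toFinite.toFinset, Finsupp.single i (1:ℕ)) = indF S := by
    ext j
    rw [Finsupp.finset_sum_apply]
    simp only [Finsupp.single_apply]
    rw [Finset.sum_ite_eq' _ j (fun _ => 1)]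
    by_cases hj : j ∈ S
    · simp only [Set.Finite.mem_toFinset, hj, if_true, indF_apply_mem hj]
    · simp only [Set.Finite.mem_toFinset, hj, if_false, indF_apply_not_mem hj]
  rw [xS, prod_X_finset, hsum]

lemma xPow_eq (μ : α → ℕ) : xPow K μ = monomial (toF μ) 1 := by
  rw [← prod_X_pow_eq_monomial (s := toF μ)]
  exact (Finset.prod_subset (Finset.subset_univ _) (fun i _ hi => by
    rw [show μ i = 0 from Finsupp.notMem_support_iff.mp hi, pow_zero])).symm

end Aux

section SFmem

variable {α : Type*} [Fintype α] (K : Type*) [Field K]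

lemma SF_gen_eq (M : Matroid α) (ℓ : ℕ) :
    {m : MvPolynomial α K |
      ∃ S : Set α, m = xS K S ∧ ∀ F : Set α, M.IsBase F → ℓ ≤ (S ∩ F).ncard} =
    (fun s => (monomial s (1:K))) ''
      {σ : α →₀ ℕ | ∃ S : Set α, σ = indF S ∧ ∀ F : Set α, M.IsBase F → ℓ ≤ (S ∩ F).ncard} := by
  ext m
  constructor
  · rintro ⟨S, rfl, hS⟩
    exact ⟨indF S, ⟨S, rfl, hS⟩, (xS_eq K S).symm⟩
  · rintro ⟨σ, ⟨S, rfl, hS⟩, rfl⟩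
    exact ⟨S, (xS_eq K S).symm, hS⟩

lemma mem_SF_iff (M : Matroid α) (ℓ : ℕ) (f : MvPolynomial α K) :
    f ∈ SF K M ℓ ↔ ∀ d ∈ f.support, ∀ F : Set α, M.IsBase F →
      ℓ ≤ ((↑d.support : Set α) ∩ F).ncard := by
  rw [SF, SF_gen_eq, mem_ideal_span_monomial_image]
  apply forall₂_congr
  intro d hd
  constructor
  · rintro ⟨σ, ⟨S, rfl, hS⟩, hle⟩ F hF
    refine le_trans (hS F hF) (Set.ncard_le_ncard ?_ (Set.toFinite _))
    intro i ⟨hiS, hiF⟩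
    refine ⟨?_, hiF⟩
    have h1 := hle i
    rw [indF_apply_mem hiS] at h1
    simp only [Finset.coe_sort_coe, Finset.mem_coe, Finsupp.mem_support_iff]
    omega
  · intro h
    refine ⟨indF (↑d.support : Set α), ⟨_, rfl, h⟩, ?_⟩
    intro i
    by_cases hi : i ∈ (↑d.support : Set α)
    · rw [indF_apply_mem hi]
      have : d i ≠ 0 := Finsupp.mem_support_iff.mp hi
      omega
    · rw [indF_apply_not_mem hi]
      exact Nat.zero_le _

end SFmem

section Mat

variable {α : Type*}

lemma base_mdel_iff {M : Matroid α} {A : Set α} {B₀ : Set α}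
    (hB₀ : M.IsBase B₀) (hB₀A : Disjoint B₀ A) {F : Set α} :
    (mdel M A).IsBase F ↔ M.IsBase F ∧ Disjoint F A := by
  rw [mdel, Matroid.isBase_restrict_iff Set.diff_subset]
  constructor
  · intro h
    have hFE : F ⊆ M.E \ A := h.subset
    refine ⟨h.isBase_of_isBase_subset hB₀ (Set.subset_diff.mpr ⟨hB₀.subset_ground, hB₀A⟩),
      (Set.subset_diff.mp hFE).2⟩
  · rintro ⟨hF, hFA⟩
    exact hF.isBasis_of_subset Set.diff_subset (Set.subset_diff.mpr ⟨hF.subset_ground, hFA⟩)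

/-- the key exchange/counting lemma -/
lemma count_lemma [Fintype α] {M : Matroid α} {A S : Set α} {ℓ : ℕ} {B₀ : Set α}
    (hB₀ : M.IsBase B₀) (hB₀A : Disjoint B₀ A)
    (hS : ∀ F' : Set α, M.IsBase F' → Disjoint F' A → ℓ ≤ (S ∩ F').ncard)
    {F : Set α} (hF : M.IsBase F) : ℓ ≤ ((S ∪ A) ∩ F).ncard := by
  obtain ⟨F', hF', hsub, hsub2⟩ :=
    (hF.indep.subset (Set.diff_subset : F \ A ⊆ F)).exists_isBase_subset_union_isBase hB₀
  have hF'A : Disjoint F' A :=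
    Set.disjoint_of_subset_left hsub2 (Set.disjoint_union_left.mpr
      ⟨Set.disjoint_sdiff_left, hB₀A⟩)
  have h1 : ℓ ≤ (S ∩ F').ncard := hS F' hF' hF'A
  have hsubset : S ∩ F' ⊆ (S ∩ (F \ A)) ∪ (F' \ (F \ A)) := by
    rintro x ⟨hxS, hxF'⟩
    by_cases hx : x ∈ F \ A
    · exact Or.inl ⟨hxS, hx⟩
    · exact Or.inr ⟨hxF', hx⟩
  have h2 : (S ∩ F').ncard ≤ (S ∩ (F \ A)).ncard + (F' \ (F \ A)).ncard :=
    le_trans (Set.ncard_le_ncard hsubset (Set.toFinite _)) (Set.ncard_union_le _ _)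
  have h3 : (F' \ (F \ A)).ncard + (F \ A).ncard = F'.ncard :=
    Set.ncard_diff_add_ncard_of_subset hsub (Set.toFinite _)
  have h4 : F'.ncard = F.ncard := hF'.ncard_eq_ncard_of_isBase hF
  have h5 : (F \ (F \ A)).ncard + (F \ A).ncard = F.ncard :=
    Set.ncard_diff_add_ncard_of_subset Set.diff_subset (Set.toFinite _)
  have h5' : F \ (F \ A) = F ∩ A := Set.diff_diff_right_self F A
  have h6 : ((S ∩ (F \ A)) ∪ (F ∩ A)).ncard ≤ ((S ∪ A) ∩ F).ncard := by
    refine Set.ncard_le_ncard ?_ (Set.toFinite _)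
    rintro x (⟨hxS, hxF, _⟩ | ⟨hxF, hxA⟩)
    · exact ⟨Or.inl hxS, hxF⟩
    · exact ⟨Or.inr hxA, hxF⟩
  have h7 : ((S ∩ (F \ A)) ∪ (F ∩ A)).ncard = (S ∩ (F \ A)).ncard + (F ∩ A).ncard := by
    refine Set.ncard_union_eq ?_ (Set.toFinite _) (Set.toFinite _)
    have hd : Disjoint (Aᶜ) A := disjoint_compl_left
    exact hd.mono (fun x hx => hx.2.2) (fun x hx => hx.2)
  rw [h5'] at h5
  omega

end Mat

section Exist

variable {α : Type*} [Fintype α] (K : Type*) [Field K]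

lemma exists_base_disjoint {M : Matroid α} {μ : α → ℕ}
    (h : xPow K μ ∉ coverIdeal K M) :
    ∃ B₀, M.IsBase B₀ ∧ Disjoint B₀ (Function.support μ) := by
  classical
  simp only [coverIdeal, Ideal.mem_iInf, Set.mem_setOf_eq, not_forall] at h
  obtain ⟨F, hF, hne⟩ := h
  refine ⟨F, hF, Set.disjoint_left.mpr fun i hiF hiA => ?_⟩
  apply hne
  rw [pS, mem_ideal_span_X_image]
  intro m hm
  rw [xPow_eq, support_monomial, if_neg one_ne_zero, Finset.mem_singleton] at hm
  refine ⟨i, hiF, ?_⟩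
  rw [hm, toF_apply]
  exact hiA

end Exist

/-- if `μ : E → ℕ` has support `A` and `x^μ ∉ J(M)`, then for every `ℓ ≥ 1`,
`SF_ℓ(J(M) : x^μ) = SF_ℓ(J(M)) : x^μ`; since `J(M) : x^μ = J(M ⧹ A)`, this says
`SF_ℓ(J(M ⧹ A)) = SF_ℓ(J(M)) : x^μ`. -/
theorem stmt13 {α : Type*} [Fintype α] (K : Type*) [Field K]
    (M : Matroid α) (hE : M.E = Set.univ) (μ : α → ℕ)
    (hnotmem : xPow K μ ∉ coverIdeal K M) (ℓ : ℕ) (hℓ : 1 ≤ ℓ) :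
    SF K (mdel M (Function.support μ)) ℓ =
      Submodule.colon (SF K M ℓ) (Ideal.span {xPow K μ}) := by
  set A := Function.support μ with hA
  obtain ⟨B₀, hB₀, hB₀A⟩ := exists_base_disjoint K hnotmem
  ext f
  rw [mem_SF_iff, Ideal.mem_colon_span_singleton, mem_SF_iff]
  have hsupp : ∀ d' : α →₀ ℕ, d' ∈ (f * xPow K μ).support ↔
      toF μ ≤ d' ∧ d' - toF μ ∈ f.support := by
    intro d'
    simp only [MvPolynomial.mem_support_iff, xPow_eq, coeff_mul_monomial', mul_one]
    split_ifs with h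
    · simp [h]
    · simp [h]
  have hset : ∀ d : α →₀ ℕ, (↑(d + toF μ).support : Set α) = ↑d.support ∪ A := by
    intro d
    ext i
    simp only [Set.mem_union, Finset.mem_coe, Finsupp.mem_support_iff, Finsupp.coe_add,
      Pi.add_apply, toF_apply, hA, Function.mem_support]
    omega
  constructor
  · intro h d' hd' F hF
    obtain ⟨hle, hmem⟩ := (hsupp d').mp hd'
    have hd'eq : d' - toF μ + toF μ = d' := tsub_add_cancel_of_le hle
    have hseteq : (↑d'.support : Set α) = ↑(d' - toF μ).support ∪ A := by
      rw [← hset, hd'eq]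
    rw [hseteq]
    exact count_lemma hB₀ hB₀A
      (fun F' hF' hdisj => h _ hmem F' ((base_mdel_iff hB₀ hB₀A).mpr ⟨hF', hdisj⟩)) hF
  · intro h d hd F hF
    rw [base_mdel_iff hB₀ hB₀A] at hF
    obtain ⟨hF, hFA⟩ := hF
    have hd' : d + toF μ ∈ (f * xPow K μ).support :=
      (hsupp _).mpr ⟨le_add_self, by rwa [add_tsub_cancel_right]⟩
    have hfin := h _ hd' F hF
    rw [hset] at hfin
    rwa [Set.union_inter_distrib_right, hFA.symm.inter_eq, Set.union_empty] at hfin
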